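/- Let P and Q be orthogonal projections on a Hilbert space H such that P Q P is compact, and let μ₀ ∈ [0,1) be the largest eigenvalue of P Q P (or 0 if there are none). Then for every f ∈ H, (1 − √μ₀)‖f‖² ≤ ⟨(2I − P − Q)f, f⟩. -/

import Mathlib

set_option maxHeartbeats 1000000

open ContinuousLinearMap Complex

lemma key_est {H : Type*} [NormedAddCommGroup H] [InnerProductSpace ℂ H] [CompleteSpace H]
    (T : H →L[ℂ] H) (hTa : ContinuousLinearMap.adjoint T = T)
    (z : H) (hz : ‖z‖ ≤ 1) :
    ‖T (T z) - ((‖T‖ : ℂ)^2) • z‖^2 ≤ ‖T‖^2 * (‖T‖^2 - ‖T z‖^2) := by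
  have h1 : ‖T (T z) - ((‖T‖ : ℂ)^2) • z‖^2
      = ‖T (T z)‖^2 - 2 * Complex.re (inner ℂ (T (T z)) (((‖T‖ : ℂ)^2) • z)) + ‖((‖T‖ : ℂ)^2) • z‖^2 := by
    have := norm_sub_sq (𝕜 := ℂ) (T (T z)) (((‖T‖ : ℂ)^2) • z)
    simpa only [RCLike.re_to_complex] using this
  have h2 : (inner ℂ (T (T z)) (((‖T‖ : ℂ)^2) • z) : ℂ) = ((‖T‖ : ℂ)^2) * inner ℂ (T (T z)) z :=
    inner_smul_right _ _ _
  have h3 : (inner ℂ (T (T z)) z : ℂ) = inner ℂ (T z) (T z) := by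
    nth_rewrite 1 [← hTa]
    exact ContinuousLinearMap.adjoint_inner_left T z (T z)
  have h4 : Complex.re (inner ℂ (T (T z)) (((‖T‖ : ℂ)^2) • z)) = ‖T‖^2 * ‖T z‖^2 := by
    rw [h2, h3]
    rw [inner_self_eq_norm_sq_to_K (𝕜 := ℂ)]
    simp [← Complex.ofReal_pow]
  have h5 : ‖((‖T‖ : ℂ)^2) • z‖^2 ≤ ‖T‖^4 := by
    rw [norm_smul]
    have : ‖(‖T‖ : ℂ)^2‖ = ‖T‖^2 := by
      rw [norm_pow, Complex.norm_real, Real.norm_eq_abs, _root_.abs_of_nonneg (norm_nonneg T)]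
    rw [this]
    calc (‖T‖^2 * ‖z‖)^2 ≤ (‖T‖^2 * 1)^2 := by
          apply pow_le_pow_left₀ (by positivity)
          exact mul_le_mul_of_nonneg_left hz (by positivity)
      _ = ‖T‖^4 := by ring
  have h6 : ‖T (T z)‖^2 ≤ ‖T‖^2 * ‖T z‖^2 := by
    have := T.le_opNorm (T z)
    calc ‖T (T z)‖^2 ≤ (‖T‖ * ‖T z‖)^2 := pow_le_pow_left₀ (norm_nonneg _) this 2
      _ = ‖T‖^2 * ‖T z‖^2 := by ring
  rw [h1, h4]
  nlinarith [h5, h6]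

lemma aux_norm_le {H : Type*} [NormedAddCommGroup H] [InnerProductSpace ℂ H] [CompleteSpace H]
    (T : H →L[ℂ] H) (hTa : ContinuousLinearMap.adjoint T = T)
    (hcpt : IsCompactOperator T)
    (hpos : ∀ x : H, 0 ≤ (inner ℂ (T x) x : ℂ).re)
    (μ₀ : ℝ) (hμ₀0 : 0 ≤ μ₀)
    (hmax : ∀ (μ : ℝ) (g : H), g ≠ 0 → T g = (μ : ℂ) • g → μ ≤ μ₀) :
    ‖T‖ ≤ μ₀ := by
  by_contra hlt
  push_neg at hlt
  have hN0 : 0 < ‖T‖ := lt_of_le_of_lt hμ₀0 hlt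
  set N : ℝ := ‖T‖ with hN
  -- approximating sequence
  have hseq : ∀ n : ℕ, ∃ x : H, ‖x‖ < 1 ∧ N - 1/(n+1) < ‖T x‖ := by
    intro n
    exact T.exists_lt_apply_of_lt_opNorm (by
      have : (0:ℝ) < 1/(n+1) := by positivity
      linarith)
  choose x hx1 hx2 using hseq
  -- subsequence with T x (φ n) convergent
  obtain ⟨K, hK, hKsub⟩ := hcpt.image_ball_subset_compact (f := (T : H →ₗ[ℂ] H)) 1
  have hmem : ∀ n, T (x n) ∈ K := fun n =>
    hKsub ⟨x n, by simpa [Metric.mem_ball] using hx1 n, rfl⟩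
  obtain ⟨y, -, φ, hφ, hconv⟩ := hK.tendsto_subseq hmem
  -- ‖T (x (φ n))‖ → N
  have hφn : ∀ n : ℕ, (n : ℝ) + 1 ≤ (φ n : ℝ) + 1 := by
    intro n
    have h : (n : ℝ) ≤ (φ n : ℝ) := by exact_mod_cast hφ.le_apply
    linarith
  have hbound : ∀ n, N - 1/(n+1) < ‖T (x (φ n))‖ := by
    intro n
    refine lt_of_le_of_lt ?_ (hx2 (φ n))
    have h1 : (1:ℝ)/(φ n + 1) ≤ 1/(n+1) := by
      apply one_div_le_one_div_of_le (by positivity) (hφn n)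
    linarith
  have hub : ∀ n, ‖T (x (φ n))‖ ≤ N := by
    intro n
    calc ‖T (x (φ n))‖ ≤ N * ‖x (φ n)‖ := T.le_opNorm _
      _ ≤ N * 1 := by
          exact mul_le_mul_of_nonneg_left (le_of_lt (hx1 (φ n))) (le_of_lt hN0)
      _ = N := mul_one N
  have htendN : Filter.Tendsto (fun n => ‖T (x (φ n))‖) Filter.atTop (nhds N) := by
    have h0 : Filter.Tendsto (fun n : ℕ => N - 1/(n+1)) Filter.atTop (nhds N) := by
      have : Filter.Tendsto (fun n : ℕ => 1 / ((n : ℝ) + 1)) Filter.atTop (nhds 0) :=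
        tendsto_one_div_add_atTop_nhds_zero_nat
      have := (tendsto_const_nhds (x := N) (f := Filter.atTop (α := ℕ))).sub this
      simpa using this
    exact tendsto_of_tendsto_of_tendsto_of_le_of_le h0 tendsto_const_nhds
      (fun n => le_of_lt (hbound n)) hub
  -- the residual tends to zero
  have hres : Filter.Tendsto
      (fun n => T (T (x (φ n))) - ((N : ℂ)^2) • x (φ n)) Filter.atTop (nhds 0) := by
    rw [tendsto_zero_iff_norm_tendsto_zero]
    have hsq : Filter.Tendsto (fun n => N^2 * (N^2 - ‖T (x (φ n))‖^2)) Filter.atTop (nhds 0) := by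
      have : Filter.Tendsto (fun n => ‖T (x (φ n))‖^2) Filter.atTop (nhds (N^2)) :=
        (htendN.pow 2)
      have h2 := ((tendsto_const_nhds (x := N^2) (f := Filter.atTop (α := ℕ))).sub this).const_mul (N^2)
      simpa using h2
    have hle : ∀ n, ‖T (T (x (φ n))) - ((N : ℂ)^2) • x (φ n)‖
        ≤ Real.sqrt (N^2 * (N^2 - ‖T (x (φ n))‖^2)) := by
      intro n
      have := key_est T hTa (x (φ n)) (le_of_lt (hx1 (φ n)))
      have h3 : ‖T (T (x (φ n))) - ((N : ℂ)^2) • x (φ n)‖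
          = Real.sqrt (‖T (T (x (φ n))) - ((N : ℂ)^2) • x (φ n)‖^2) := by
        rw [Real.sqrt_sq (norm_nonneg _)]
      rw [h3]
      exact Real.sqrt_le_sqrt this
    have hsqrt : Filter.Tendsto (fun n => Real.sqrt (N^2 * (N^2 - ‖T (x (φ n))‖^2)))
        Filter.atTop (nhds 0) := by
      have := (Real.continuous_sqrt.tendsto 0).comp hsq
      simpa [Function.comp_def] using this
    exact squeeze_zero (fun n => norm_nonneg _) hle hsqrt
  -- convergence of x (φ n)
  have hTT : Filter.Tendsto (fun n => T (T (x (φ n)))) Filter.atTop (nhds (T y)) :=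
    (T.continuous.tendsto y).comp hconv
  have hNx : Filter.Tendsto (fun n => ((N : ℂ)^2) • x (φ n)) Filter.atTop (nhds (T y)) := by
    have := hTT.sub hres
    simpa using this
  have hNne : ((N : ℂ)^2) ≠ 0 :=
    pow_ne_zero 2 (by exact_mod_cast ne_of_gt hN0)
  have hxconv : Filter.Tendsto (fun n => x (φ n)) Filter.atTop (nhds ((((N : ℂ)^2)⁻¹) • T y)) := by
    have := hNx.const_smul (((N : ℂ)^2)⁻¹)
    simpa [smul_smul, inv_mul_cancel₀ hNne] using this
  obtain ⟨w, hw⟩ : ∃ w : H, w = (((N : ℂ)^2)⁻¹) • T y := ⟨_, rfl⟩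
  rw [← hw] at hxconv
  -- T w = y
  have hTw : T w = y := by
    have h1 : Filter.Tendsto (fun n => T (x (φ n))) Filter.atTop (nhds (T w)) :=
      (T.continuous.tendsto w).comp hxconv
    exact tendsto_nhds_unique h1 hconv
  -- ‖y‖ = N
  have hyN : ‖y‖ = N := by
    have h1 : Filter.Tendsto (fun n => ‖T (x (φ n))‖) Filter.atTop (nhds ‖y‖) :=
      (continuous_norm.tendsto y).comp hconv
    exact tendsto_nhds_unique h1 htendN
  have hyne : y ≠ 0 := by
    intro h; rw [h, norm_zero] at hyN; exact absurd hyN.symm (ne_of_gt hN0)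
  have hwne : w ≠ 0 := by
    intro h; rw [h, map_zero] at hTw; exact hyne hTw.symm
  -- T (T w) = N² w
  have hT2w : T (T w) = ((N : ℂ)^2) • w := by
    have h1 : ((N : ℂ)^2) • w = T y := by
      rw [hw, smul_smul, mul_inv_cancel₀ hNne, one_smul]
    rw [hTw, h1]
  -- case split on u = T w + N • w
  by_cases hu : T w + (N : ℂ) • w = 0
  · -- then T w = -N w, contradicting positivity
    have h1 : T w = (-N : ℂ) • w := by
      have := hu
      rw [add_eq_zero_iff_eq_neg] at this
      rw [this, ← neg_smul]
    have h2 := hpos w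
    rw [h1] at h2
    have h3 : (inner ℂ ((-N : ℂ) • w) w : ℂ) = (-N : ℂ) * inner ℂ w w := by
      rw [inner_smul_left]
      congr 1
      simp [Complex.ext_iff]
    rw [h3] at h2
    have h4 : (inner ℂ w w : ℂ) = ((‖w‖^2 : ℝ) : ℂ) := by
      rw [inner_self_eq_norm_sq_to_K (𝕜 := ℂ)]; norm_cast
    rw [h4] at h2
    have h5 : ((-N : ℂ) * ((‖w‖^2 : ℝ) : ℂ)).re = -N * ‖w‖^2 := by
      have : (-N : ℂ) * ((‖w‖^2 : ℝ) : ℂ) = (((-N) * ‖w‖^2 : ℝ) : ℂ) := by push_cast; ring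
      rw [this, Complex.ofReal_re]
    rw [h5] at h2
    have h6 : 0 < ‖w‖^2 := pow_pos (norm_pos_iff.mpr hwne) 2
    nlinarith
  · -- u is an eigenvector with eigenvalue N
    have heig : T (T w + (N : ℂ) • w) = (N : ℂ) • (T w + (N : ℂ) • w) := by
      rw [map_add, map_smul, hT2w, smul_add, smul_smul, ← pow_two]
      abel
    have := hmax N _ hu heig
    linarith

lemma proj_inner {H : Type*} [NormedAddCommGroup H] [InnerProductSpace ℂ H] [CompleteSpace H]
    (R : H →L[ℂ] H) (hR : R ∘L R = R) (hRa : ContinuousLinearMap.adjoint R = R) (b : H) :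
    (inner ℂ (R b) b : ℂ) = ((‖R b‖^2 : ℝ) : ℂ) := by
  have hb : R (R b) = R b := by
    have := DFunLike.congr_fun hR b
    simpa using this
  calc (inner ℂ (R b) b : ℂ) = inner ℂ (R (R b)) b := by rw [hb]
    _ = inner ℂ (ContinuousLinearMap.adjoint R (R b)) b := by rw [hRa]
    _ = inner ℂ (R b) (R b) := ContinuousLinearMap.adjoint_inner_left R b (R b)
    _ = ((‖R b‖^2 : ℝ) : ℂ) := by rw [inner_self_eq_norm_sq_to_K]; norm_cast

theorem spectral_lower_bound_two_proj {H : Type*} [NormedAddCommGroup H]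
    [InnerProductSpace ℂ H] [CompleteSpace H] (P Q : H →L[ℂ] H)
    (hP : P ∘L P = P) (hPa : ContinuousLinearMap.adjoint P = P)
    (hQ : Q ∘L Q = Q) (hQa : ContinuousLinearMap.adjoint Q = Q)
    (hcpt : IsCompactOperator (P ∘L Q ∘L P))
    (μ₀ : ℝ) (hμ₀0 : 0 ≤ μ₀) (hμ₀1 : μ₀ < 1)
    (hmax : ∀ (μ : ℝ) (g : H), g ≠ 0 → (P ∘L Q ∘L P) g = (μ : ℂ) • g → μ ≤ μ₀) (f : H) :
    (1 - Real.sqrt μ₀) * ‖f‖ ^ 2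
      ≤ (inner ℂ (((2 : ℂ) • (1 : H →L[ℂ] H) - P - Q) f) f : ℂ).re := by
  set T : H →L[ℂ] H := P ∘L Q ∘L P with hT
  -- T is self-adjoint
  have hTa : ContinuousLinearMap.adjoint T = T := by
    rw [hT]
    rw [ContinuousLinearMap.adjoint_comp, ContinuousLinearMap.adjoint_comp, hPa, hQa]
    rfl
  -- T is positive
  have hQid : ∀ b : H, Q (Q b) = Q b := fun b => by simpa using DFunLike.congr_fun hQ b
  have hPid : ∀ b : H, P (P b) = P b := fun b => by simpa using DFunLike.congr_fun hP b
  have hTval : ∀ z : H, (inner ℂ (T z) z : ℂ) = ((‖Q (P z)‖^2 : ℝ) : ℂ) := by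
    intro z
    have h1 : T z = P (Q (P z)) := rfl
    calc (inner ℂ (T z) z : ℂ) = inner ℂ (P (Q (P z))) z := by rw [h1]
      _ = inner ℂ (ContinuousLinearMap.adjoint P (Q (P z))) z := by rw [hPa]
      _ = inner ℂ (Q (P z)) (P z) := ContinuousLinearMap.adjoint_inner_left P z (Q (P z))
      _ = ((‖Q (P z)‖^2 : ℝ) : ℂ) := proj_inner Q hQ hQa (P z)
  have hpos : ∀ z : H, 0 ≤ (inner ℂ (T z) z : ℂ).re := by
    intro z; rw [hTval z, Complex.ofReal_re]; positivity
  -- norm bound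
  have hnorm : ‖T‖ ≤ μ₀ := aux_norm_le T hTa hcpt hpos μ₀ hμ₀0 hmax
  -- pointwise bound: ‖Q u‖ ≤ √μ₀ ‖u‖ for u in range of P
  set c : ℝ := Real.sqrt μ₀ with hc
  have hc0 : 0 ≤ c := Real.sqrt_nonneg _
  set u : H := P f with hu
  set v : H := Q f with hv
  have hPu : P u = u := hPid f
  have hQv : Q v = v := hQid f
  have hQu_le : ‖Q u‖ ≤ c * ‖u‖ := by
    have h1 : (inner ℂ (Q u) u : ℂ) = inner ℂ (T u) u := by
      have : T u = P (Q (P u)) := rfl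
      rw [hTval u, hPu, proj_inner Q hQ hQa u]
    have h2 : ‖Q u‖^2 ≤ μ₀ * ‖u‖^2 := by
      have h3 : ((‖Q u‖^2 : ℝ) : ℂ).re = (inner ℂ (T u) u : ℂ).re := by
        rw [← h1, proj_inner Q hQ hQa u]
      rw [Complex.ofReal_re] at h3
      have h4 : (inner ℂ (T u) u : ℂ).re ≤ ‖T u‖ * ‖u‖ := by
        have := re_inner_le_norm (𝕜 := ℂ) (T u) u
        simpa [RCLike.re_to_complex] using this
      have h5 : ‖T u‖ ≤ μ₀ * ‖u‖ := by
        calc ‖T u‖ ≤ ‖T‖ * ‖u‖ := T.le_opNorm u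
          _ ≤ μ₀ * ‖u‖ := mul_le_mul_of_nonneg_right hnorm (norm_nonneg _)
      calc ‖Q u‖^2 = (inner ℂ (T u) u : ℂ).re := h3
        _ ≤ ‖T u‖ * ‖u‖ := h4
        _ ≤ (μ₀ * ‖u‖) * ‖u‖ := mul_le_mul_of_nonneg_right h5 (norm_nonneg _)
        _ = μ₀ * ‖u‖^2 := by ring
    calc ‖Q u‖ = Real.sqrt (‖Q u‖^2) := (Real.sqrt_sq (norm_nonneg _)).symm
      _ ≤ Real.sqrt (μ₀ * ‖u‖^2) := Real.sqrt_le_sqrt h2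
      _ = c * ‖u‖ := by rw [Real.sqrt_mul hμ₀0, Real.sqrt_sq (norm_nonneg _)]
  -- main estimate
  set t : ℝ := ‖u‖^2 + ‖v‖^2 with ht
  have ht0 : 0 ≤ t := by positivity
  have hre_uv : (inner ℂ u v : ℂ).re ≤ c * ‖u‖ * ‖v‖ := by
    have h1 : (inner ℂ u v : ℂ) = inner ℂ (Q u) v := by
      calc (inner ℂ u v : ℂ) = inner ℂ u (Q v) := by rw [hQv]
        _ = inner ℂ (ContinuousLinearMap.adjoint Q u) v :=
            (ContinuousLinearMap.adjoint_inner_left Q v u).symm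
        _ = inner ℂ (Q u) v := by rw [hQa]
    calc (inner ℂ u v : ℂ).re ≤ ‖(inner ℂ u v : ℂ)‖ := Complex.re_le_norm _
      _ = ‖(inner ℂ (Q u) v : ℂ)‖ := by rw [h1]
      _ ≤ ‖Q u‖ * ‖v‖ := norm_inner_le_norm _ _
      _ ≤ (c * ‖u‖) * ‖v‖ := mul_le_mul_of_nonneg_right hQu_le (norm_nonneg _)
      _ = c * ‖u‖ * ‖v‖ := by ring
  have hnuv : ‖u + v‖^2 ≤ (1 + c) * t := by
    have h1 : ‖u + v‖^2 = ‖u‖^2 + 2 * (inner ℂ u v : ℂ).re + ‖v‖^2 := by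
      have := norm_add_sq (𝕜 := ℂ) u v
      simpa [RCLike.re_to_complex] using this
    have h2 : 2 * ‖u‖ * ‖v‖ ≤ t := by nlinarith [sq_nonneg (‖u‖ - ‖v‖)]
    nlinarith [mul_le_mul_of_nonneg_left h2 hc0]
  have ht_le : t ≤ (1 + c) * ‖f‖^2 := by
    have h1 : t = (inner ℂ (u + v) f : ℂ).re := by
      have hPuf : (inner ℂ u f : ℂ) = ((‖u‖^2 : ℝ) : ℂ) := proj_inner P hP hPa f
      have hQvf : (inner ℂ v f : ℂ) = ((‖v‖^2 : ℝ) : ℂ) := proj_inner Q hQ hQa f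
      rw [inner_add_left, hPuf, hQvf]
      simp [ht, ← Complex.ofReal_pow]
    have h2 : (inner ℂ (u + v) f : ℂ).re ≤ ‖u + v‖ * ‖f‖ := by
      have := re_inner_le_norm (𝕜 := ℂ) (u + v) f
      simpa only [RCLike.re_to_complex] using this
    have h3 : t ≤ ‖u + v‖ * ‖f‖ := h1 ▸ h2
    have h4 : t^2 ≤ ((1 + c) * t) * ‖f‖^2 := by
      calc t^2 ≤ (‖u + v‖ * ‖f‖)^2 := by nlinarith [norm_nonneg (u+v), norm_nonneg f]
        _ = ‖u + v‖^2 * ‖f‖^2 := by ring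
        _ ≤ ((1 + c) * t) * ‖f‖^2 := by nlinarith [sq_nonneg ‖f‖]
    rcases eq_or_lt_of_le ht0 with h | h
    · rw [← h]; positivity
    · have h5 : t * t ≤ t * ((1 + c) * ‖f‖^2) := by
        calc t * t = t^2 := by ring
          _ ≤ ((1 + c) * t) * ‖f‖^2 := h4
          _ = t * ((1 + c) * ‖f‖^2) := by ring
      exact le_of_mul_le_mul_left h5 h
  -- expand the left-hand side
  have hlhs : (inner ℂ (((2 : ℂ) • (1 : H →L[ℂ] H) - P - Q) f) f : ℂ).re
      = 2 * ‖f‖^2 - t := by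
    have h1 : ((2 : ℂ) • (1 : H →L[ℂ] H) - P - Q) f = (2 : ℂ) • f - u - v := by
      rw [ContinuousLinearMap.sub_apply, ContinuousLinearMap.sub_apply,
        ContinuousLinearMap.smul_apply, ContinuousLinearMap.one_apply]
    rw [h1, inner_sub_left, inner_sub_left, inner_smul_left]
    have hPuf : (inner ℂ u f : ℂ) = ((‖u‖^2 : ℝ) : ℂ) := proj_inner P hP hPa f
    have hQvf : (inner ℂ v f : ℂ) = ((‖v‖^2 : ℝ) : ℂ) := proj_inner Q hQ hQa f
    have hff : (inner ℂ f f : ℂ) = ((‖f‖^2 : ℝ) : ℂ) := by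
      rw [inner_self_eq_norm_sq_to_K]; norm_cast
    rw [hPuf, hQvf, hff]
    simp only [Complex.sub_re, Complex.mul_re, Complex.ofReal_re, Complex.ofReal_im,
      Complex.conj_re, Complex.conj_im, ht]
    norm_num
    ring
  rw [hlhs]
  have hring : (1 - c) * ‖f‖^2 = 2 * ‖f‖^2 - (1 + c) * ‖f‖^2 := by ring
  linarith
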